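/- Let f₁, …, f_m : ℝ^d → ℝ be convex functions and define f : ℝ^d → ℝ by f(x) = max{f₁(x), …, f_m(x)}. For a point x ∈ ℝ^d put I(x) = {1 ≤ i ≤ m : f_i(x) = f(x)}. If f attains its global minimum at a point y ∈ ℝ^d and, for each i ∈ I(y), the function f_i is differentiable at y, then the origin o of ℝ^d satisfies o ∈ conv{∇f_i(y) : i ∈ I(y)}, where ∇f_i(y) is the gradient of f_i at y. -/

import Mathlib

open Filter Topology

/-- Let `f₁, …, f_m : ℝ^d → ℝ` be convex functions and let `F x = max_i f_i x`.
If `F` attains its global minimum at `y` and each `f_i` with `f_i y = F y` is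
differentiable at `y`, then the origin lies in the convex hull of the gradients
`∇f_i(y)` over the indices `i` with `f_i y = F y`. -/
theorem zero_mem_convexHull_gradients_of_isMinOn_max
    {d m : ℕ} (f : Fin m → EuclideanSpace ℝ (Fin d) → ℝ)
    (hconv : ∀ i, ConvexOn ℝ Set.univ (f i))
    (F : EuclideanSpace ℝ (Fin d) → ℝ)
    (hF : ∀ x, IsGreatest (Set.range fun i => f i x) (F x))
    (y : EuclideanSpace ℝ (Fin d))
    (hmin : ∀ x, F y ≤ F x)
    (hdiff : ∀ i, f i y = F y → DifferentiableAt ℝ (f i) y) :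
    (0 : EuclideanSpace ℝ (Fin d)) ∈
      convexHull ℝ {g | ∃ i, f i y = F y ∧ g = gradient (f i) y} := by
  by_contra h0
  set S : Set (EuclideanSpace ℝ (Fin d)) := {g | ∃ i, f i y = F y ∧ g = gradient (f i) y} with hS
  have hSfin : S.Finite := by
    have hsub : S ⊆ Set.range (fun i => gradient (f i) y) := by
      rintro g ⟨i, _, rfl⟩; exact ⟨i, rfl⟩
    exact (Set.finite_range _).subset hsub
  have hclosed : IsClosed (convexHull ℝ S) := hSfin.isClosed_convexHull ℝ
  obtain ⟨φ, c, hφ0, hφ⟩ :=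
    geometric_hahn_banach_point_closed (convex_convexHull ℝ S) hclosed h0
  have hc : (0 : ℝ) < c := by simpa using hφ0
  set w : EuclideanSpace ℝ (Fin d) := (InnerProductSpace.toDual ℝ (EuclideanSpace ℝ (Fin d))).symm φ with hw
  set v : EuclideanSpace ℝ (Fin d) := -w with hv
  -- key inner product inequality for active indices
  have hinner : ∀ i, f i y = F y → fderiv ℝ (f i) y v < 0 := by
    intro i hi
    have hmem : gradient (f i) y ∈ convexHull ℝ S :=
      subset_convexHull ℝ S ⟨i, hi, rfl⟩
    have hgt : c < φ (gradient (f i) y) := hφ _ hmem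
    have hfd : fderiv ℝ (f i) y v = inner ℝ (gradient (f i) y) v := by
      rw [gradient, InnerProductSpace.toDual_symm_apply]
    have hwv : inner ℝ (gradient (f i) y) v = -(φ (gradient (f i) y)) := by
      rw [hv, inner_neg_right, real_inner_comm, hw,
        InnerProductSpace.toDual_symm_apply]
    rw [hfd, hwv]
    linarith
  -- for each index, eventually along 𝓝[>] 0 the value drops below F y
  have key : ∀ i, ∀ᶠ t in 𝓝[>] (0 : ℝ), f i (y + t • v) < F y := by
    intro i
    by_cases hi : f i y = F y
    · -- active: negative directional derivative
      have hdi := hdiff i hi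
      have hcurve : HasDerivAt (fun t : ℝ => y + t • v) v 0 := by
        simpa using ((hasDerivAt_id (0 : ℝ)).smul_const v).const_add y
      have hcomp : HasDerivAt (fun t : ℝ => f i (y + t • v)) (fderiv ℝ (f i) y v) 0 := by
        have h1 : HasFDerivAt (f i) (fderiv ℝ (f i) y) (y + (0 : ℝ) • v) := by
          simpa using hdi.hasFDerivAt
        exact h1.comp_hasDerivAt (0 : ℝ) hcurve
      have hslope := hasDerivAt_iff_tendsto_slope.mp hcomp
      have hneg := hinner i hi
      have hev : ∀ᶠ t in 𝓝[≠] (0 : ℝ),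
          slope (fun t : ℝ => f i (y + t • v)) 0 t < 0 :=
        hslope.eventually_mem (Iio_mem_nhds hneg)
      have hev' : ∀ᶠ t in 𝓝[>] (0 : ℝ),
          slope (fun t : ℝ => f i (y + t • v)) 0 t < 0 :=
        hev.filter_mono (nhdsWithin_mono 0 (fun x hx => ne_of_gt hx))
      filter_upwards [hev', self_mem_nhdsWithin] with t hts ht
      have htpos : (0 : ℝ) < t := ht
      have hts' : t⁻¹ * (f i (y + t • v) - f i y) < 0 := by
        simpa [slope] using hts
      have hlt : f i (y + t • v) < f i y := by
        by_contra hge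
        push_neg at hge
        have : 0 ≤ t⁻¹ * (f i (y + t • v) - f i y) :=
          mul_nonneg (inv_nonneg.mpr htpos.le) (by linarith)
        linarith
      exact hi ▸ hlt
    · -- inactive: continuity
      have hle : f i y ≤ F y := (hF y).2 ⟨i, rfl⟩
      have hlt : f i y < F y := lt_of_le_of_ne hle hi
      have hcont : Continuous (f i) := by
        have := (hconv i).continuousOn isOpen_univ
        rw [← continuousOn_univ]; exact this
      have hcont' : ContinuousAt (fun t : ℝ => f i (y + t • v)) 0 :=
        (hcont.comp (by continuity : Continuous fun t : ℝ => y + t • v)).continuousAt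
      have : ∀ᶠ t in 𝓝 (0 : ℝ), f i (y + t • v) < F y := by
        have h0' : f i (y + (0 : ℝ) • v) < F y := by simpa using hlt
        exact hcont'.eventually_mem (Iio_mem_nhds h0')
      exact this.filter_mono nhdsWithin_le_nhds
  have hall : ∀ᶠ t in 𝓝[>] (0 : ℝ), ∀ i, f i (y + t • v) < F y :=
    eventually_all.2 key
  obtain ⟨t, ht⟩ := hall.exists
  obtain ⟨j, hj⟩ := (hF (y + t • v)).1
  have : F (y + t • v) < F y := by rw [← hj]; exact ht j
  exact absurd (hmin (y + t • v)) (not_le.mpr this)
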